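/- arXiv:1803.07374 — 8 statements merged into one kernel-verified Lean document; each statement's English description precedes it below -/
import Mathlib

section
/- Let $f, h$ be differentiable functions on an open convex set $Q \subseteq \mathbb{R}^n$ and $L > 0$. Then $f$ is $L$-smooth relative to $h$ on $Q$ (i.e., $f(x) \leq f(y) + \langle \nabla f(y), x-y\rangle + L D_h(x,y)$ for all $x,y \in Q$) if and only if the function $L h - f$ is convex on $Q$. -/
open RealInnerProductSpace

/-- `f` is `L`-smooth relative to `h` on an open convex set `Q` iff `L•h - f` is
convex on `Q`. -/
theorem stmt_2 {n : ℕ} (Q : Set (EuclideanSpace ℝ (Fin n)))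
    (hQo : IsOpen Q) (hQc : Convex ℝ Q)
    (f h : EuclideanSpace ℝ (Fin n) → ℝ)
    (f' h' : EuclideanSpace ℝ (Fin n) → EuclideanSpace ℝ (Fin n))
    (L : ℝ) (hL : 0 < L)
    (hdf : ∀ x ∈ Q, HasGradientAt f (f' x) x)
    (hdh : ∀ x ∈ Q, HasGradientAt h (h' x) x) :
    (∀ x ∈ Q, ∀ y ∈ Q,
        f x ≤ f y + ⟪f' y, x - y⟫ + L * (h x - h y - ⟪h' y, x - y⟫)) ↔
      ConvexOn ℝ Q (fun x => L * h x - f x) := by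
  set g : EuclideanSpace ℝ (Fin n) → ℝ := fun x => L * h x - f x with hgdef
  set G : EuclideanSpace ℝ (Fin n) → EuclideanSpace ℝ (Fin n) :=
    fun y => L • h' y - f' y with hGdef
  have hGinner : ∀ y v, ⟪G y, v⟫ = L * ⟪h' y, v⟫ - ⟪f' y, v⟫ := by
    intro y v
    rw [hGdef]
    rw [inner_sub_left, real_inner_smul_left]
  -- the hypothesis is equivalent to the first-order condition for g
  have key : (∀ x ∈ Q, ∀ y ∈ Q,
      f x ≤ f y + ⟪f' y, x - y⟫ + L * (h x - h y - ⟪h' y, x - y⟫)) ↔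
      ∀ x ∈ Q, ∀ y ∈ Q, g y + ⟪G y, x - y⟫ ≤ g x := by
    constructor
    · intro H x hx y hy
      have := H x hx y hy
      rw [hGinner]
      simp only [hgdef]
      nlinarith
    · intro H x hx y hy
      have := H x hx y hy
      rw [hGinner] at this
      simp only [hgdef] at this
      nlinarith
  rw [key]
  -- g has gradient G on Q
  have hdg : ∀ y ∈ Q, HasGradientAt g (G y) y := by
    intro y hy
    rw [hasGradientAt_iff_hasFDerivAt]
    have hF : HasFDerivAt g
        (L • ((InnerProductSpace.toDual ℝ _) (h' y)) -
          (InnerProductSpace.toDual ℝ _) (f' y)) y := by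
      have h1 := (hasGradientAt_iff_hasFDerivAt.mp (hdh y hy)).const_smul L
      have h2 := hasGradientAt_iff_hasFDerivAt.mp (hdf y hy)
      exact h1.sub h2
    have : (InnerProductSpace.toDual ℝ _) (G y) =
        L • ((InnerProductSpace.toDual ℝ _) (h' y)) -
          (InnerProductSpace.toDual ℝ _) (f' y) := by
      simp [hGdef, map_sub, map_smul]
    rw [this]
    exact hF
  constructor
  · -- first-order condition → convex
    intro H
    refine ⟨hQc, fun x hx y hy a b ha hb hab => ?_⟩
    obtain rfl : b = 1 - a := by linarith
    have hz : a • x + (1 - a) • y ∈ Q := hQc hx hy ha hb hab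
    have h1 := H x hx _ hz
    have h2 := H y hy _ hz
    have hsum : a • (x - (a • x + (1 - a) • y)) + (1 - a) • (y - (a • x + (1 - a) • y)) = 0 := by
      module
    have hin : a * ⟪G (a • x + (1 - a) • y), x - (a • x + (1 - a) • y)⟫ +
        (1 - a) * ⟪G (a • x + (1 - a) • y), y - (a • x + (1 - a) • y)⟫ = 0 := by
      rw [← real_inner_smul_right, ← real_inner_smul_right, ← inner_add_right, hsum,
        inner_zero_right]
    have e1 := mul_le_mul_of_nonneg_left h1 ha
    have e2 := mul_le_mul_of_nonneg_left h2 hb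
    simp only [smul_eq_mul]
    nlinarith [e1, e2, hin]
  · -- convex → first-order condition
    intro hc x hx y hy
    rcases eq_or_ne x y with rfl | hxy
    · simp
    -- the segment function
    set c : ℝ → EuclideanSpace ℝ (Fin n) := fun t => y + t • (x - y) with hcdef
    have hcQ : ∀ t ∈ Set.Icc (0:ℝ) 1, c t ∈ Q := by
      intro t ht
      have : (1 - t) • y + t • x ∈ Q :=
        hQc hy hx (by linarith [ht.2]) ht.1 (by ring)
      have hce : c t = (1 - t) • y + t • x := by
        simp only [hcdef]; module
      rw [hce]; exact this
    have hφc : ConvexOn ℝ (Set.Icc (0:ℝ) 1) (fun t => g (c t)) := by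
      refine ⟨convex_Icc 0 1, fun s hs t ht a b ha hb hab => ?_⟩
      obtain rfl : b = 1 - a := by linarith
      have hcomb : c (a * s + (1 - a) * t) = a • c s + (1 - a) • c t := by
        simp only [hcdef]
        module
      have := hc.2 (hcQ s hs) (hcQ t ht) ha hb hab
      simp only [smul_eq_mul]
      rw [hcomb]
      simpa using this
    have hderiv : HasDerivAt (fun t => g (c t)) ⟪G y, x - y⟫ 0 := by
      have hcd : HasDerivAt c (x - y) 0 := by
        have := ((hasDerivAt_id (0:ℝ)).smul_const (x - y)).const_add y
        rw [one_smul] at this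
        exact this
      have hc0 : c 0 = y := by simp [hcdef]
      have hgF : HasFDerivAt g ((InnerProductSpace.toDual ℝ _) (G y)) (c 0) := by
        rw [hc0]; exact hasGradientAt_iff_hasFDerivAt.mp (hdg y hy)
      have := hgF.comp_hasDerivAt 0 hcd
      simp only [InnerProductSpace.toDual_apply_apply] at this
      exact this
    have hs := hφc.le_slope_of_hasDerivAt (Set.left_mem_Icc.mpr zero_le_one)
      (Set.right_mem_Icc.mpr zero_le_one) one_pos hderiv
    rw [slope_def_field] at hs
    have hc1 : c 1 = x := by simp [hcdef]
    have hc0 : c 0 = y := by simp [hcdef]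
    rw [hc1, hc0] at hs
    simp only [sub_zero, div_one] at hs
    linarith
end

section
/- Let $f$ be $L$-smooth relative to $h$ on an open convex set $Q$. Then $\langle \nabla f(x) - \nabla f(y), x - y\rangle \leq L \langle \nabla h(x) - \nabla h(y), x - y\rangle$ for all $x, y \in Q$. -/
open RealInnerProductSpace

/-- Relative `L`-smoothness implies the gradient co-monotonicity inequality. -/
theorem stmt_4 {n : ℕ} (Q : Set (EuclideanSpace ℝ (Fin n)))
    (hQo : IsOpen Q) (hQc : Convex ℝ Q)
    (f h : EuclideanSpace ℝ (Fin n) → ℝ)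
    (f' h' : EuclideanSpace ℝ (Fin n) → EuclideanSpace ℝ (Fin n))
    (L : ℝ)
    (hdf : ∀ x ∈ Q, HasGradientAt f (f' x) x)
    (hdh : ∀ x ∈ Q, HasGradientAt h (h' x) x)
    (hsmooth : ∀ x ∈ Q, ∀ y ∈ Q,
      f x ≤ f y + ⟪f' y, x - y⟫ + L * (h x - h y - ⟪h' y, x - y⟫)) :
    ∀ x ∈ Q, ∀ y ∈ Q,
      ⟪f' x - f' y, x - y⟫ ≤ L * ⟪h' x - h' y, x - y⟫ := by
  intro x hx y hy
  have h1 := hsmooth x hx y hy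
  have h2 := hsmooth y hy x hx
  have e1 : (y : EuclideanSpace ℝ (Fin n)) - x = -(x - y) := by abel
  rw [e1, inner_neg_right, inner_neg_right] at h2
  rw [inner_sub_left, inner_sub_left]
  linarith
end

section
/- Let $f$ be twice continuously differentiable on an open convex set $Q \subseteq \mathbb{R}^n$, and suppose $L \nabla^2 h(x) \succeq \nabla^2 f(x)$ for all $x \in Q$ (in the sense of positive semidefinite ordering), where $h$ is also twice continuously differentiable. Then $f$ is $L$-smooth relative to $h$ on $Q$, i.e., $f(x) \leq f(y) + \langle \nabla f(y), x-y\rangle + L D_h(x,y)$ for all $x, y \in Q$. -/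
open RealInnerProductSpace

/-- Hessian domination `L ∇²h ⪰ ∇²f` on an open convex set implies relative
`L`-smoothness of `f` w.r.t. `h`. -/
theorem stmt_5 {n : ℕ} (Q : Set (EuclideanSpace ℝ (Fin n)))
    (hQo : IsOpen Q) (hQc : Convex ℝ Q)
    (f h : EuclideanSpace ℝ (Fin n) → ℝ)
    (f' h' : EuclideanSpace ℝ (Fin n) → EuclideanSpace ℝ (Fin n))
    (f'' h'' : EuclideanSpace ℝ (Fin n) →
      (EuclideanSpace ℝ (Fin n) →L[ℝ] EuclideanSpace ℝ (Fin n)))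
    (L : ℝ)
    (hdf : ∀ x ∈ Q, HasGradientAt f (f' x) x)
    (hdh : ∀ x ∈ Q, HasGradientAt h (h' x) x)
    (hdf' : ∀ x ∈ Q, HasFDerivAt f' (f'' x) x)
    (hdh' : ∀ x ∈ Q, HasFDerivAt h' (h'' x) x)
    (hcf : ContinuousOn f'' Q) (hch : ContinuousOn h'' Q)
    (hhess : ∀ x ∈ Q, ∀ v : EuclideanSpace ℝ (Fin n),
      ⟪f'' x v, v⟫ ≤ L * ⟪h'' x v, v⟫) :
    ∀ x ∈ Q, ∀ y ∈ Q,
      f x ≤ f y + ⟪f' y, x - y⟫ + L * (h x - h y - ⟪h' y, x - y⟫) := by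
  intro x hx y hy
  set v : EuclideanSpace ℝ (Fin n) := x - y with hv
  set c : ℝ → EuclideanSpace ℝ (Fin n) := fun t => y + t • v with hcdef
  have hmem : ∀ t ∈ Set.Icc (0:ℝ) 1, c t ∈ Q := fun t ht =>
    hQc.add_smul_sub_mem hy hx ht
  have hcd : ∀ t : ℝ, HasDerivAt c v t := fun t => by
    simpa [hcdef] using ((hasDerivAt_id t).smul_const v).const_add y
  set d : ℝ → ℝ := fun t => L * ⟪h' (c t), v⟫ - ⟪f' (c t), v⟫ with hddef
  -- derivative of ψ := L∘h∘c - f∘c is d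
  have hψ : ∀ t ∈ Set.Icc (0:ℝ) 1,
      HasDerivAt (fun s => L * h (c s) - f (c s)) (d t) t := by
    intro t ht
    have hmt := hmem t ht
    have h1 : HasDerivAt (fun s => h (c s)) ⟪h' (c t), v⟫ t := by
      have := (hdh _ hmt).hasFDerivAt.comp_hasDerivAt t (hcd t); simp at this; exact this
    have h2 : HasDerivAt (fun s => f (c s)) ⟪f' (c t), v⟫ t := by
      have := (hdf _ hmt).hasFDerivAt.comp_hasDerivAt t (hcd t); simp at this; exact this
    exact (h1.const_mul L).sub h2
  -- derivative of d
  have hdderiv : ∀ t ∈ Set.Icc (0:ℝ) 1,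
      HasDerivAt d (L * ⟪h'' (c t) v, v⟫ - ⟪f'' (c t) v, v⟫) t := by
    intro t ht
    have hmt := hmem t ht
    have h1 : HasDerivAt (fun s => h' (c s)) (h'' (c t) v) t :=
      (hdh' _ hmt).comp_hasDerivAt t (hcd t)
    have h2 : HasDerivAt (fun s => f' (c s)) (f'' (c t) v) t :=
      (hdf' _ hmt).comp_hasDerivAt t (hcd t)
    have h1' : HasDerivAt (fun s => ⟪h' (c s), v⟫) ⟪h'' (c t) v, v⟫ t := by
      simpa using h1.inner ℝ (hasDerivAt_const t v)
    have h2' : HasDerivAt (fun s => ⟪f' (c s), v⟫) ⟪f'' (c t) v, v⟫ t := by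
      simpa using h2.inner ℝ (hasDerivAt_const t v)
    exact (h1'.const_mul L).sub h2'
  -- d is monotone on [0,1]
  have hdmono : MonotoneOn d (Set.Icc (0:ℝ) 1) := by
    apply monotoneOn_of_deriv_nonneg (convex_Icc 0 1)
    · exact fun t ht => ((hdderiv t ht).continuousAt).continuousWithinAt
    · intro t ht
      rw [interior_Icc] at ht
      exact ((hdderiv t (Set.mem_Icc_of_Ioo ht)).differentiableAt).differentiableWithinAt
    · intro t ht
      rw [interior_Icc] at ht
      rw [(hdderiv t (Set.mem_Icc_of_Ioo ht)).deriv]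
      have := hhess (c t) (hmem t (Set.mem_Icc_of_Ioo ht)) v
      linarith
  -- χ := ψ - d 0 * t is monotone on [0,1]
  have hχd : ∀ t ∈ Set.Icc (0:ℝ) 1,
      HasDerivAt (fun t => L * h (c t) - f (c t) - d 0 * t) (d t - d 0) t := by
    intro t ht
    have := (hψ t ht).sub ((hasDerivAt_id t).const_mul (d 0)); simp at this; exact this
  have hχmono : MonotoneOn (fun t => L * h (c t) - f (c t) - d 0 * t)
      (Set.Icc (0:ℝ) 1) := by
    apply monotoneOn_of_deriv_nonneg (convex_Icc 0 1)
    · exact fun t ht => ((hχd t ht).continuousAt).continuousWithinAt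
    · intro t ht
      rw [interior_Icc] at ht
      exact ((hχd t (Set.mem_Icc_of_Ioo ht)).differentiableAt).differentiableWithinAt
    · intro t ht
      rw [interior_Icc] at ht
      rw [(hχd t (Set.mem_Icc_of_Ioo ht)).deriv]
      have := hdmono (Set.left_mem_Icc.2 zero_le_one) (Set.mem_Icc_of_Ioo ht) ht.1.le
      linarith
  have key := hχmono (Set.left_mem_Icc.2 zero_le_one) (Set.right_mem_Icc.2 zero_le_one)
    zero_le_one
  have hc0 : c 0 = y := by simp [hcdef]
  have hc1 : c 1 = x := by simp [hcdef, hv]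
  simp only [hddef, hc0, hc1, mul_zero, mul_one, sub_zero] at key
  linarith
end

section
/- (Three point property) Let $\phi, h$ be differentiable convex functions on a convex set $Q \subseteq \mathbb{R}^n$, with $D_h$ the Bregman distance of $h$. Fix $z \in Q$ and suppose $z_+ \in Q$ minimizes $x \mapsto \phi(x) + D_h(x,z)$ over $Q$. Then for all $x \in Q$: $\phi(x) + D_h(x,z) \geq \phi(z_+) + D_h(z_+, z) + D_h(x, z_+)$. -/
open RealInnerProductSpace

lemma slope_ge (G : ℝ → ℝ) (d c : ℝ) (hG : HasDerivAt G d 0)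
    (hs : ∀ t ∈ Set.Ioc (0:ℝ) 1, c ≤ (G t - G 0) / t) : c ≤ d := by
  have ht : Filter.Tendsto (slope G 0) (nhdsWithin 0 {(0:ℝ)}ᶜ) (nhds d) :=
    hasDerivAt_iff_tendsto_slope.mp hG
  have ht' : Filter.Tendsto (slope G 0) (nhdsWithin 0 (Set.Ioi 0)) (nhds d) :=
    ht.mono_left (nhdsWithin_mono 0 (fun t htt => by
      simp only [Set.mem_compl_iff, Set.mem_singleton_iff]
      exact ne_of_gt htt))
  refine ge_of_tendsto ht' ?_
  filter_upwards [Ioc_mem_nhdsGT_of_mem (Set.left_mem_Ico.mpr one_pos)] with t htt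
  have := hs t htt
  simpa [slope_def_field, div_sub_div_same, sub_zero] using this

lemma slope_le (G : ℝ → ℝ) (d c : ℝ) (hG : HasDerivAt G d 0)
    (hs : ∀ t ∈ Set.Ioc (0:ℝ) 1, (G t - G 0) / t ≤ c) : d ≤ c := by
  have := slope_ge (fun t => -(G t)) (-d) (-c) hG.neg (fun t htt => by
    have h1 := hs t htt
    have h2 : (-(G t) - -(G 0)) / t = -((G t - G 0) / t) := by ring
    simp only [h2]
    linarith)
  linarith

lemma lineDerivAux {E : Type*} [NormedAddCommGroup E] [InnerProductSpace ℝ E] [CompleteSpace E]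
    (f : E → ℝ) (g a b : E) (hf : HasGradientAt f g a) :
    HasDerivAt (fun t : ℝ => f (a + t • (b - a))) ⟪g, b - a⟫ 0 := by
  have hL : HasDerivAt (fun t : ℝ => a + t • (b - a)) (b - a) 0 := by
    simpa using ((hasDerivAt_id (0:ℝ)).smul_const (b - a)).const_add a
  have hf' : HasFDerivAt f ((InnerProductSpace.toDual ℝ E) g) (a + (0:ℝ) • (b - a)) := by
    simpa using hf.hasFDerivAt
  have hc := hf'.comp_hasDerivAt 0 hL
  rw [InnerProductSpace.toDual_apply_apply] at hc
  exact hc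

/-- Three point property. -/
theorem stmt_6 {n : ℕ} (Q : Set (EuclideanSpace ℝ (Fin n))) (hQ : Convex ℝ Q)
    (φ h : EuclideanSpace ℝ (Fin n) → ℝ)
    (φ' h' : EuclideanSpace ℝ (Fin n) → EuclideanSpace ℝ (Fin n))
    (hφconv : ConvexOn ℝ Q φ) (hhconv : ConvexOn ℝ Q h)
    (hdφ : ∀ x ∈ Q, HasGradientAt φ (φ' x) x)
    (hdh : ∀ x ∈ Q, HasGradientAt h (h' x) x)
    (z : EuclideanSpace ℝ (Fin n)) (hz : z ∈ Q)
    (zp : EuclideanSpace ℝ (Fin n)) (hzp : zp ∈ Q)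
    (hmin : ∀ x ∈ Q,
      φ zp + (h zp - h z - ⟪h' z, zp - z⟫) ≤ φ x + (h x - h z - ⟪h' z, x - z⟫)) :
    ∀ x ∈ Q,
      φ x + (h x - h z - ⟪h' z, x - z⟫) ≥
        φ zp + (h zp - h z - ⟪h' z, zp - z⟫) +
          (h x - h zp - ⟪h' zp, x - zp⟫) := by
  intro x hx
  set L : ℝ → EuclideanSpace ℝ (Fin n) := fun t => zp + t • (x - zp) with hLdef
  have hL0 : L 0 = zp := by simp [hLdef]
  have hLconv : ∀ t ∈ Set.Ioc (0:ℝ) 1, L t = (1 - t) • zp + t • x := by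
    intro t _
    simp only [hLdef]
    rw [smul_sub]
    module
  have hLQ : ∀ t ∈ Set.Ioc (0:ℝ) 1, L t ∈ Q := by
    intro t htt
    rw [hLconv t htt]
    exact hQ hzp hx (by linarith [htt.2]) (le_of_lt htt.1) (by ring)
  -- gradient inequality for φ
  have hA : ⟪φ' zp, x - zp⟫ ≤ φ x - φ zp := by
    refine slope_le _ _ _ (lineDerivAux φ (φ' zp) zp x (hdφ zp hzp)) ?_
    intro t htt
    have h0 : zp + (0:ℝ) • (x - zp) = zp := by simp
    rw [h0, div_le_iff₀ htt.1]
    have hcv := hφconv.2 hzp hx (by linarith [htt.2] : (0:ℝ) ≤ 1 - t)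
      (le_of_lt htt.1) (by ring)
    have hpt : (1 - t) • zp + t • x = zp + t • (x - zp) := by
      rw [smul_sub]; module
    rw [hpt] at hcv
    simp only [smul_eq_mul] at hcv
    nlinarith [hcv]
  -- optimality: derivative of objective along L at 0 is nonneg
  have hinner : HasGradientAt (fun y : EuclideanSpace ℝ (Fin n) => ⟪h' z, y⟫) (h' z) zp := by
    refine hasGradientAt_iff_hasFDerivAt.mpr ?_
    have := ((InnerProductSpace.toDual ℝ (EuclideanSpace ℝ (Fin n))) (h' z)).hasFDerivAt
      (x := zp)
    exact this
  have hIL : HasDerivAt (fun t : ℝ => ⟪h' z, L t⟫) ⟪h' z, x - zp⟫ 0 :=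
    lineDerivAux _ (h' z) zp x hinner
  have hG : HasDerivAt (fun t : ℝ => φ (L t) + h (L t) - ⟪h' z, L t⟫)
      (⟪φ' zp, x - zp⟫ + ⟪h' zp, x - zp⟫ - ⟪h' z, x - zp⟫) 0 :=
    ((lineDerivAux φ (φ' zp) zp x (hdφ zp hzp)).add
      (lineDerivAux h (h' zp) zp x (hdh zp hzp))).sub hIL
  have hB : (0:ℝ) ≤ ⟪φ' zp, x - zp⟫ + ⟪h' zp, x - zp⟫ - ⟪h' z, x - zp⟫ := by
    refine slope_ge _ _ _ hG ?_
    intro t htt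
    refine div_nonneg ?_ (le_of_lt htt.1)
    have hm := hmin (L t) (hLQ t htt)
    rw [hL0]
    rw [inner_sub_right, inner_sub_right] at hm
    linarith
  simp only [inner_sub_right] at hA hB ⊢
  linarith
end

section
/- Define the symmetry measure $\alpha(h) = \inf\{D_h(x,y)/D_h(y,x) : x \neq y\}$ for a strictly convex differentiable $h$. If $f$ is $\mu$-strongly convex relative to $h$ with minimizer $x_*$ of $f$ over $Q$ (so that $\langle \nabla f(x_*), x - x_*\rangle \geq 0$ for all $x \in Q$), then for any $x \in Q$: $f(x) - f(x_*) \geq \mu\, \alpha(h)\, D_h(x_*, x)$. -/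
open RealInnerProductSpace

private lemma bregman_pos {n : ℕ} {Q : Set (EuclideanSpace ℝ (Fin n))} (hQ : Convex ℝ Q)
    {h : EuclideanSpace ℝ (Fin n) → ℝ}
    {h' : EuclideanSpace ℝ (Fin n) → EuclideanSpace ℝ (Fin n)}
    (hstrict : StrictConvexOn ℝ Q h)
    (hdh : ∀ x ∈ Q, HasGradientAt h (h' x) x)
    {x y : EuclideanSpace ℝ (Fin n)} (hx : x ∈ Q) (hy : y ∈ Q) (hxy : x ≠ y) :
    0 < h y - h x - ⟪h' x, y - x⟫ := by
  set g : ℝ → ℝ := fun t => h (x + t • (y - x)) with hg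
  have hmem : ∀ t : ℝ, t ∈ Set.Icc (0:ℝ) 1 → x + t • (y - x) ∈ Q := by
    intro t ht
    have heq : x + t • (y - x) = (1 - t) • x + t • y := by
      rw [smul_sub, sub_smul, one_smul]; abel
    rw [heq]
    exact hQ hx hy (by linarith [ht.2]) ht.1 (by ring)
  have hinj : ∀ a b : ℝ, a ≠ b → x + a • (y - x) ≠ x + b • (y - x) := by
    intro a b hab hcon
    have h1 : a • (y - x) = b • (y - x) := add_left_cancel hcon
    have h2 : (a - b) • (y - x) = 0 := by rw [sub_smul, h1, sub_self]
    rcases smul_eq_zero.mp h2 with h3 | h3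
    · exact hab (sub_eq_zero.mp h3)
    · exact hxy (sub_eq_zero.mp h3).symm
  have hgstrict : StrictConvexOn ℝ (Set.Icc (0:ℝ) 1) g := by
    refine ⟨convex_Icc 0 1, ?_⟩
    intro a ha b hb hab p q hp hq hpq
    have h1 : x + (p * a + q * b) • (y - x)
        = p • (x + a • (y - x)) + q • (x + b • (y - x)) := by
      match_scalars <;> linarith
    have h2 := hstrict.2 (hmem a ha) (hmem b hb) (hinj a b hab) hp hq hpq
    simpa [hg, smul_eq_mul, h1] using h2
  have hc : HasDerivAt (fun t : ℝ => x + t • (y - x)) (y - x) (0:ℝ) := by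
    simpa using ((hasDerivAt_id (0:ℝ)).smul_const (y - x)).const_add x
  have hgd : HasDerivAt g (⟪h' x, y - x⟫) 0 := by
    have hF : HasFDerivAt h (InnerProductSpace.toDual ℝ _ (h' x))
        ((fun t : ℝ => x + t • (y - x)) 0) := by
      simpa using (hdh x hx).hasFDerivAt
    simpa [hg, Function.comp_def, InnerProductSpace.toDual_apply_apply]
      using hF.comp_hasDerivAt 0 hc
  have hslope := hgstrict.lt_slope_of_hasDerivAt
      (Set.left_mem_Icc.mpr zero_le_one) (Set.right_mem_Icc.mpr zero_le_one)
      one_pos hgd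
  have hs : slope g 0 1 = g 1 - g 0 := by
    rw [slope_def_field]; simp
  have hg0 : g 0 = h x := by simp [hg]
  have hg1 : g 1 = h y := by simp [hg]
  rw [hs, hg0, hg1] at hslope
  linarith

/-- Suboptimality lower bound via the symmetry measure of the Bregman distance. -/
theorem stmt_9 {n : ℕ} (Q : Set (EuclideanSpace ℝ (Fin n))) (hQ : Convex ℝ Q)
    (f h : EuclideanSpace ℝ (Fin n) → ℝ)
    (f' h' : EuclideanSpace ℝ (Fin n) → EuclideanSpace ℝ (Fin n))
    (hstrict : StrictConvexOn ℝ Q h)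
    (hdf : ∀ x ∈ Q, HasGradientAt f (f' x) x)
    (hdh : ∀ x ∈ Q, HasGradientAt h (h' x) x)
    (μ : ℝ) (hμ : 0 ≤ μ)
    (α : ℝ)
    (hα : α = sInf {r : ℝ | ∃ x ∈ Q, ∃ y ∈ Q, x ≠ y ∧
      r = (h x - h y - ⟪h' y, x - y⟫) / (h y - h x - ⟪h' x, y - x⟫)})
    (hsc : ∀ x ∈ Q, ∀ y ∈ Q,
      f y ≥ f x + ⟪f' x, y - x⟫ + μ * (h y - h x - ⟪h' x, y - x⟫))
    (xs : EuclideanSpace ℝ (Fin n)) (hxs : xs ∈ Q)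
    (hopt : ∀ x ∈ Q, 0 ≤ ⟪f' xs, x - xs⟫) :
    ∀ x ∈ Q, f x - f xs ≥ μ * α * (h xs - h x - ⟪h' x, xs - x⟫) := by
  intro x hx
  by_cases hxe : x = xs
  · subst hxe
    simp [sub_self, inner_zero_right]
  · have hD1 : 0 < h x - h xs - ⟪h' xs, x - xs⟫ :=
      bregman_pos hQ hstrict hdh hxs hx (fun e => hxe e.symm)
    have hD2 : 0 < h xs - h x - ⟪h' x, xs - x⟫ :=
      bregman_pos hQ hstrict hdh hx hxs hxe
    set S : Set ℝ := {r : ℝ | ∃ x ∈ Q, ∃ y ∈ Q, x ≠ y ∧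
      r = (h x - h y - ⟪h' y, x - y⟫) / (h y - h x - ⟪h' x, y - x⟫)} with hS
    have hbdd : BddBelow S := by
      refine ⟨0, fun r hr => ?_⟩
      obtain ⟨a, ha, b, hb, hab, rfl⟩ := hr
      have h1 := bregman_pos hQ hstrict hdh hb ha (fun e => hab e.symm)
      have h2 := bregman_pos hQ hstrict hdh ha hb hab
      exact div_nonneg h1.le h2.le
    have hmemS : (h x - h xs - ⟪h' xs, x - xs⟫) / (h xs - h x - ⟪h' x, xs - x⟫)
        ∈ S := ⟨x, hx, xs, hxs, hxe, rfl⟩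
    have hαle : α ≤ (h x - h xs - ⟪h' xs, x - xs⟫)
        / (h xs - h x - ⟪h' x, xs - x⟫) := hα ▸ csInf_le hbdd hmemS
    have hkey : α * (h xs - h x - ⟪h' x, xs - x⟫)
        ≤ h x - h xs - ⟪h' xs, x - xs⟫ := by
      have := mul_le_mul_of_nonneg_right hαle hD2.le
      rwa [div_mul_cancel₀ _ hD2.ne'] at this
    have hkey2 : μ * α * (h xs - h x - ⟪h' x, xs - x⟫)
        ≤ μ * (h x - h xs - ⟪h' xs, x - xs⟫) := by
      rw [mul_assoc]
      exact mul_le_mul_of_nonneg_left hkey hμ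
    have hsc1 := hsc xs hxs x hx
    have hopt1 := hopt x hx
    linarith
end

section
/- Let $\{f_t\}_{t\geq 0}$, $\{D_t\}_{t\geq 0}$ be nonnegative real sequences, $f_* \in \mathbb{R}$, and $\delta, \varphi, \psi$ reals with $0 < \delta \leq 1$ and $0 < \psi \leq \varphi$. Suppose for all $t \geq 0$: $f_{t+1} \leq (1-\delta) f_t + \delta f_* + (\varphi - \delta\psi) D_t - \varphi D_{t+1}$. Then for every $k \geq 1$, with $C_t = (\varphi/(\varphi - \delta\psi))^{t-1} \cdot (\varphi - \psi)/(\delta^{-1}\varphi - \psi)$ for $1 \leq t \leq k-1$ and $C_k = (\varphi/(\varphi - \delta\psi))^{k-1}$, and $c_t = C_t / \sum_{s=1}^k C_s$, it holds that $\sum_{t=1}^k c_t (f_t - f_*) \leq \frac{(\varphi - \delta\psi) D_0 + (1-\delta)(f_0 - f_*)}{1 - \varphi/\psi + (\varphi/\psi)(\varphi/(\varphi - \delta\psi))^{k-1}}$. -/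
/-- Key technical lemma: convergence rate from a per-iteration decrease. -/
theorem stmt_10 (f D : ℕ → ℝ) (hf : ∀ t, 0 ≤ f t) (hD : ∀ t, 0 ≤ D t)
    (fs δ φ ψ : ℝ) (hδ0 : 0 < δ) (hδ1 : δ ≤ 1) (hψ0 : 0 < ψ) (hψφ : ψ ≤ φ)
    (hpos : 0 < φ - δ * ψ)
    (hrec : ∀ t, f (t + 1) ≤ (1 - δ) * f t + δ * fs + (φ - δ * ψ) * D t - φ * D (t + 1))
    (k : ℕ) (hk : 1 ≤ k)
    (C : ℕ → ℝ)
    (hC : ∀ t, 1 ≤ t → t ≤ k - 1 →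
      C t = (φ / (φ - δ * ψ)) ^ (t - 1) * (φ - ψ) / (δ⁻¹ * φ - ψ))
    (hCk : C k = (φ / (φ - δ * ψ)) ^ (k - 1)) :
    ∑ t ∈ Finset.Icc 1 k, (C t / ∑ s ∈ Finset.Icc 1 k, C s) * (f t - fs) ≤
      ((φ - δ * ψ) * D 0 + (1 - δ) * (f 0 - fs)) /
        (1 - φ / ψ + φ / ψ * (φ / (φ - δ * ψ)) ^ (k - 1)) := by
  obtain ⟨m, rfl⟩ : ∃ m, k = m + 1 := ⟨k - 1, (Nat.succ_pred_eq_of_pos hk).symm⟩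
  have hφ0 : 0 < φ := lt_of_lt_of_le hψ0 hψφ
  have hδne : δ ≠ 0 := ne_of_gt hδ0
  have hψne : ψ ≠ 0 := ne_of_gt hψ0
  have hne : φ - δ * ψ ≠ 0 := ne_of_gt hpos
  obtain ⟨r, hr⟩ : ∃ r : ℝ, r = φ / (φ - δ * ψ) := ⟨_, rfl⟩
  obtain ⟨c, hc⟩ : ∃ c : ℝ, c = δ * (φ - ψ) / (φ - δ * ψ) := ⟨_, rfl⟩
  rw [← hr] at hC hCk ⊢
  have hr1 : 1 < r := by
    rw [hr, lt_div_iff₀ hpos]; nlinarith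
  have hr0 : (0:ℝ) ≤ r := by linarith
  have hrne1 : r - 1 ≠ 0 := by intro h; linarith [hr1]
  have hrφ : r * (φ - δ * ψ) = φ := by
    rw [hr]; field_simp
  have hcr : c + (1 - δ) * r = 1 := by
    rw [hc, hr]; field_simp; ring
  -- main induction
  have key : ∀ n, (∑ t ∈ Finset.Icc 1 n, c * r ^ (t - 1) * (f t - fs))
      + r ^ n * (f (n + 1) - fs) + r ^ n * φ * D (n + 1)
      ≤ (φ - δ * ψ) * D 0 + (1 - δ) * (f 0 - fs) := by
    intro n
    induction n with
    | zero =>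
      simp only [Finset.Icc_eq_empty (by norm_num : ¬ (1:ℕ) ≤ 0), Finset.sum_empty, pow_zero]
      have h0 := hrec 0
      nlinarith [h0]
    | succ n ih =>
      have h1 := hrec (n + 1)
      have hrn : (0:ℝ) ≤ r ^ n := pow_nonneg hr0 n
      have h2 : r ^ (n + 1) * f (n + 1 + 1) ≤
          r ^ (n + 1) * ((1 - δ) * f (n + 1) + δ * fs + (φ - δ * ψ) * D (n + 1)
            - φ * D (n + 1 + 1)) :=
        mul_le_mul_of_nonneg_left h1 (pow_nonneg hr0 _)
      have h3 : r ^ (n + 1) * (φ - δ * ψ) = r ^ n * φ := by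
        rw [pow_succ, mul_assoc, hrφ]
      have h4 : c * r ^ n + (1 - δ) * r ^ (n + 1) = r ^ n := by
        rw [pow_succ]; linear_combination (r ^ n) * hcr
      rw [Finset.sum_Icc_succ_top (Nat.one_le_iff_ne_zero.mpr (Nat.succ_ne_zero n))]
      simp only [Nat.add_sub_cancel]
      have h5 : r ^ (n + 1) * (φ - δ * ψ) * D (n + 1) = r ^ n * φ * D (n + 1) := by
        rw [h3]
      have h6 : c * r ^ n * (f (n + 1) - fs) + (1 - δ) * r ^ (n + 1) * (f (n + 1) - fs)
          = r ^ n * (f (n + 1) - fs) := by linear_combination (f (n + 1) - fs) * h4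
      nlinarith [ih, h2, h5, h6]
  -- specialize at n = m and drop the nonneg D term
  have hkey : (∑ t ∈ Finset.Icc 1 m, c * r ^ (t - 1) * (f t - fs))
      + r ^ m * (f (m + 1) - fs)
      ≤ (φ - δ * ψ) * D 0 + (1 - δ) * (f 0 - fs) := by
    have := key m
    nlinarith [mul_nonneg (mul_nonneg (pow_nonneg hr0 m) hφ0.le) (hD (m + 1))]
  -- C's on Icc 1 m equal c * r^(t-1)
  have hCc' : ∀ t ∈ Finset.Icc 1 m, C t = c * r ^ (t - 1) := by
    intro t ht
    rw [Finset.mem_Icc] at ht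
    rw [hC t ht.1 (by omega)]
    have hd : δ⁻¹ * φ - ψ = (φ - δ * ψ) / δ := by field_simp
    rw [hd, hc]
    field_simp
  have hmk : m + 1 - 1 = m := by omega
  have hsum1 : ∑ t ∈ Finset.Icc 1 (m + 1), C t * (f t - fs)
      = (∑ t ∈ Finset.Icc 1 m, c * r ^ (t - 1) * (f t - fs)) + r ^ m * (f (m + 1) - fs) := by
    rw [Finset.sum_Icc_succ_top (by omega : 1 ≤ m + 1), hCk, hmk]
    congr 1
    apply Finset.sum_congr rfl
    intro t ht
    rw [hCc' t ht]
  -- reindex geometric sum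
  have hreidx : ∀ n : ℕ, ∑ t ∈ Finset.Icc 1 n, c * r ^ (t - 1) = ∑ i ∈ Finset.range n, c * r ^ i := by
    intro n
    induction n with
    | zero => simp
    | succ n ih =>
      rw [Finset.sum_Icc_succ_top (by omega : 1 ≤ n + 1), Finset.sum_range_succ, ih,
        Nat.add_sub_cancel]
  have hgeo : ∑ t ∈ Finset.Icc 1 m, c * r ^ (t - 1) = c * ((r ^ m - 1) / (r - 1)) := by
    rw [hreidx, ← Finset.mul_sum, geom_sum_eq (ne_of_gt hr1)]
  have hcd : c / (r - 1) = (φ - ψ) / ψ := by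
    have h1 : r - 1 = δ * ψ / (φ - δ * ψ) := by rw [hr]; field_simp; ring
    rw [h1, hc]
    rw [div_div_div_eq]
    rw [div_eq_div_iff (by positivity) hψ0.ne']
    ring
  have hS : ∑ s ∈ Finset.Icc 1 (m + 1), C s = 1 - φ / ψ + φ / ψ * r ^ m := by
    rw [Finset.sum_Icc_succ_top (by omega : 1 ≤ m + 1), hCk, hmk,
      Finset.sum_congr rfl hCc', hgeo]
    rw [show c * ((r ^ m - 1) / (r - 1)) = c / (r - 1) * (r ^ m - 1) by ring, hcd]
    field_simp
    ring
  have hrm1 : (1:ℝ) ≤ r ^ m := one_le_pow₀ hr1.le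
  have hSpos : 0 < ∑ s ∈ Finset.Icc 1 (m + 1), C s := by
    rw [hS]
    have h1 : 0 ≤ φ / ψ * (r ^ m - 1) := by
      apply mul_nonneg (div_nonneg hφ0.le hψ0.le); linarith
    nlinarith
  -- finish
  rw [hmk, show (1 - φ / ψ + φ / ψ * r ^ m) = ∑ s ∈ Finset.Icc 1 (m + 1), C s from hS.symm]
  have hlhs : ∑ t ∈ Finset.Icc 1 (m + 1),
      (C t / ∑ s ∈ Finset.Icc 1 (m + 1), C s) * (f t - fs)
      = (∑ t ∈ Finset.Icc 1 (m + 1), C t * (f t - fs)) / ∑ s ∈ Finset.Icc 1 (m + 1), C s := by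
    rw [Finset.sum_div]
    apply Finset.sum_congr rfl
    intro t _
    ring
  rw [hlhs, div_le_div_iff_of_pos_right hSpos, hsum1]
  exact hkey
end

section
/- For every $\alpha > 0$ there exists a convex continuous function $\gamma_\alpha : (0,\infty) \to \mathbb{R}$ satisfying the functional equation $\gamma_\alpha(x + \alpha) = \log(x) + \gamma_\alpha(x)$ for all $x > 0$. -/
/-- Existence of a convex continuous solution `γ_α` of the functional equation
`γ_α(x + α) = log x + γ_α(x)` on the positive reals. -/
theorem stmt_12 (α : ℝ) (hα : 0 < α) :
    ∃ γ : ℝ → ℝ, ConvexOn ℝ (Set.Ioi (0 : ℝ)) γ ∧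
      ContinuousOn γ (Set.Ioi (0 : ℝ)) ∧
      ∀ x : ℝ, 0 < x → γ (x + α) = Real.log x + γ x := by
  have hα' : α ≠ 0 := ne_of_gt hα
  refine ⟨fun x => Real.log (Real.Gamma (x / α)) + (x / α) * Real.log α, ?_, ?_, ?_⟩
  · have h1 : ConvexOn ℝ (Set.Ioi (0 : ℝ))
        (fun x : ℝ => Real.log (Real.Gamma (x / α))) := by
      have hc := Real.convexOn_log_Gamma.comp_affineMap
        (DistribSMul.toLinearMap ℝ ℝ (1 / α : ℝ)).toAffineMap
      have hs : (DistribSMul.toLinearMap ℝ ℝ (1 / α : ℝ)).toAffineMap ⁻¹'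
          Set.Ioi (0 : ℝ) = Set.Ioi (0 : ℝ) := by
        ext x
        simp only [Set.mem_preimage, LinearMap.coe_toAffineMap,
          DistribSMul.toLinearMap_apply, Set.mem_Ioi, smul_eq_mul]
        constructor
        · intro h
          by_contra hx
          push_neg at hx
          nlinarith [mul_nonneg (le_of_lt (one_div_pos.mpr hα)) (neg_nonneg.mpr hx)]
        · intro h
          positivity
      rw [hs] at hc
      convert hc using 2 with x
      case e'_5 => rfl
      case e'_6 => rfl
      case e'_9 => rfl
      case e'_4 => rfl
      simp [DistribSMul.toLinearMap_apply, Function.comp, div_eq_inv_mul]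
    have h2 : ConvexOn ℝ (Set.Ioi (0 : ℝ)) (fun x : ℝ => (x / α) * Real.log α) := by
      have := (LinearMap.smulRight (LinearMap.id : ℝ →ₗ[ℝ] ℝ)
        (Real.log α / α)).convexOn (convex_Ioi (0 : ℝ))
      convert this using 2 with x
      · rfl
      · rfl
      simp [LinearMap.smulRight_apply]
      ring
    exact h1.add h2
  · apply ContinuousOn.add
    · apply continuousOn_of_forall_continuousAt
      intro x hx
      have hx' : (0:ℝ) < x := hx
      have hg : ContinuousAt Real.Gamma (x / α) := by
        refine (Real.differentiableAt_Gamma fun m => ?_).continuousAt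
        intro h
        have h1 : x / α = -(m:ℝ) := h
        linarith [div_pos hx' hα, (Nat.cast_nonneg m : (0:ℝ) ≤ m)]
      have hd : ContinuousAt (fun y : ℝ => y / α) x := continuousAt_id.div_const α
      have hgd : ContinuousAt (fun y : ℝ => Real.Gamma (y / α)) x := ContinuousAt.comp (g := Real.Gamma) (f := fun y : ℝ => y / α) hg hd
      exact hgd.log
        (Real.Gamma_pos_of_pos (div_pos hx' hα)).ne'
    · exact ((continuous_id.div_const α).mul continuous_const).continuousOn
  · intro x hx
    show Real.log (Real.Gamma ((x + α) / α)) + (x + α) / α * Real.log α =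
      Real.log x + (Real.log (Real.Gamma (x / α)) + x / α * Real.log α)
    have hxα : (x + α) / α = x / α + 1 := by field_simp
    rw [hxα, Real.Gamma_add_one (ne_of_gt (div_pos hx hα)),
      Real.log_mul (ne_of_gt (div_pos hx hα))
        (Real.Gamma_pos_of_pos (div_pos hx hα)).ne',
      Real.log_div (ne_of_gt hx) hα']
    ring
end

section
/- Let $\alpha > 0$ and let $\Gamma_\alpha = \exp(\gamma_\alpha)$ where $\gamma_\alpha : (0,\infty) \to \mathbb{R}$ is convex, continuous, and satisfies $\gamma_\alpha(x+\alpha) = \log(x) + \gamma_\alpha(x)$ (so $\Gamma_\alpha(x+\alpha) = x\,\Gamma_\alpha(x)$). Then for all $0 \leq s \leq \alpha$ and $x > 0$: $x^{1 - s/\alpha} \leq \Gamma_\alpha(x+\alpha)/\Gamma_\alpha(x+s) \leq (x+\alpha)^{1 - s/\alpha}$. -/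
/-- Gautschi-type inequality for the generalized Gamma function `Γ_α = exp ∘ γ_α`. -/
theorem stmt_13 (α : ℝ) (hα : 0 < α) (γ : ℝ → ℝ)
    (hconv : ConvexOn ℝ (Set.Ioi (0 : ℝ)) γ)
    (hcont : ContinuousOn γ (Set.Ioi (0 : ℝ)))
    (hfe : ∀ x : ℝ, 0 < x → γ (x + α) = Real.log x + γ x)
    (s : ℝ) (hs0 : 0 ≤ s) (hsα : s ≤ α) (x : ℝ) (hx : 0 < x) :
    x ^ (1 - s / α) ≤ Real.exp (γ (x + α)) / Real.exp (γ (x + s)) ∧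
      Real.exp (γ (x + α)) / Real.exp (γ (x + s)) ≤ (x + α) ^ (1 - s / α) := by
  have hα' : α ≠ 0 := ne_of_gt hα
  set t := s / α with ht
  have ht0 : 0 ≤ t := div_nonneg hs0 hα.le
  have ht1 : t ≤ 1 := (div_le_one hα).2 hsα
  have hxs : 0 < x + s := by linarith
  have hxα : 0 < x + α := by linarith
  have htα : t * α = s := div_mul_cancel₀ s hα'
  rw [← Real.exp_sub]
  constructor
  · -- lower bound
    have hcomb : (1 - t) • x + t • (x + α) = x + s := by
      simp only [smul_eq_mul]; nlinarith [htα]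
    have h1 := hconv.2 (Set.mem_Ioi.2 hx) (Set.mem_Ioi.2 hxα)
      (by linarith : (0:ℝ) ≤ 1 - t) ht0 (by ring)
    rw [hcomb] at h1
    have hfe1 := hfe x hx
    have key : (1 - t) * Real.log x ≤ γ (x + α) - γ (x + s) := by
      have : γ (x + s) ≤ (1 - t) * γ x + t * γ (x + α) := by
        simpa [smul_eq_mul] using h1
      rw [hfe1] at this ⊢
      nlinarith
    calc x ^ (1 - t) = Real.exp ((1 - t) * Real.log x) := by
          rw [Real.rpow_def_of_pos hx, mul_comm]
      _ ≤ _ := Real.exp_le_exp.2 key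
  · -- upper bound
    have hxsα : 0 < x + s + α := by linarith
    have hcomb : t • (x + s) + (1 - t) • (x + s + α) = x + α := by
      simp only [smul_eq_mul]; nlinarith [htα]
    have h2 := hconv.2 (Set.mem_Ioi.2 hxs) (Set.mem_Ioi.2 hxsα)
      ht0 (by linarith : (0:ℝ) ≤ 1 - t) (by ring)
    rw [hcomb] at h2
    have hfe2 := hfe (x + s) hxs
    have key : γ (x + α) - γ (x + s) ≤ (1 - t) * Real.log (x + α) := by
      have h3 : γ (x + α) ≤ t * γ (x + s) + (1 - t) * γ (x + s + α) := by
        simpa [smul_eq_mul] using h2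
      rw [hfe2] at h3
      have hlog : Real.log (x + s) ≤ Real.log (x + α) :=
        Real.log_le_log hxs (by linarith)
      nlinarith
    calc Real.exp (γ (x + α) - γ (x + s))
        ≤ Real.exp ((1 - t) * Real.log (x + α)) := Real.exp_le_exp.2 key
      _ = (x + α) ^ (1 - t) := by rw [Real.rpow_def_of_pos hxα, mul_comm]
end
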